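/- The 5×5 real matrix M = [[−4,0,0,0,4],[0,−2,√2,0,0],[0,−√2,0,√2,0],[0,0,−√2,2,0],[−4,0,0,0,4]] satisfies M³ = 0, M² ≠ 0, and rank(M) = 3; hence its only eigenvalue is 0 with geometric multiplicity 2 and Jordan type 3+2. -/
import Mathlib
open Matrix Real

noncomputable def M13 : Matrix (Fin 5) (Fin 5) ℝ :=
  !![-4, 0, 0, 0, 4;
     0, -2, Real.sqrt 2, 0, 0;
     0, -Real.sqrt 2, 0, Real.sqrt 2, 0;
     0, 0, -Real.sqrt 2, 2, 0;
     -4, 0, 0, 0, 4]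

noncomputable def M13sq : Matrix (Fin 5) (Fin 5) ℝ :=
  !![0,0,0,0,0;
     0,2,-2*Real.sqrt 2,2,0;
     0,2*Real.sqrt 2,-4,2*Real.sqrt 2,0;
     0,2,-2*Real.sqrt 2,2,0;
     0,0,0,0,0]

lemma M13_sq : M13 ^ 2 = M13sq := by
  have hs : Real.sqrt 2 * Real.sqrt 2 = 2 := Real.mul_self_sqrt (by norm_num)
  rw [pow_two]
  ext i j
  fin_cases i <;> fin_cases j <;>
    simp [M13, M13sq, Matrix.mul_apply, Fin.sum_univ_five, Matrix.vecHead, Matrix.vecTail] <;>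
    nlinarith [hs]

lemma M13_cube : M13 ^ 3 = 0 := by
  have hs : Real.sqrt 2 * Real.sqrt 2 = 2 := Real.mul_self_sqrt (by norm_num)
  have : M13 ^ 3 = M13sq * M13 := by rw [pow_succ, M13_sq]
  rw [this]
  ext i j
  fin_cases i <;> fin_cases j <;>
    simp [M13, M13sq, Matrix.mul_apply, Fin.sum_univ_five, Matrix.vecHead, Matrix.vecTail] <;>
    nlinarith [hs]

noncomputable def kv1 : Fin 5 → ℝ := ![1,0,0,0,1]
noncomputable def kv2 : Fin 5 → ℝ := ![0,1,Real.sqrt 2,1,0]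

lemma kv_indep : LinearIndependent ℝ ![kv1, kv2] := by
  rw [LinearIndependent.pair_iff]
  intro a b hab
  have h0 := congrFun hab 0
  have h1 := congrFun hab 1
  simp [kv1, kv2] at h0 h1
  exact ⟨h0, h1⟩

lemma ker_eq : LinearMap.ker M13.mulVecLin = Submodule.span ℝ (Set.range ![kv1, kv2]) := by
  have hs : Real.sqrt 2 * Real.sqrt 2 = 2 := Real.mul_self_sqrt (by norm_num)
  have hsne : Real.sqrt 2 ≠ 0 := by positivity
  apply le_antisymm
  · intro v hv
    have hm : M13.mulVec v = 0 := by
      rw [LinearMap.mem_ker, Matrix.mulVecLin_apply] at hv; exact hv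
    have e0 := congrFun hm 0
    have e1 := congrFun hm 1
    have e2 := congrFun hm 2
    have e3 := congrFun hm 3
    simp [M13, Matrix.mulVec, dotProduct, Fin.sum_univ_five] at e0 e1 e2 e3
    have h4 : v 4 = v 0 := by linarith
    have h3 : v 3 = v 1 := by
      have : Real.sqrt 2 * (v 3 - v 1) = 0 := by ring_nf; linarith
      have := mul_eq_zero.mp this
      rcases this with h | h
      · exact absurd h hsne
      · linarith
    have h2 : v 2 = Real.sqrt 2 * v 1 := by
      have : Real.sqrt 2 * (v 2 - Real.sqrt 2 * v 1) = 0 := by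
        rw [mul_sub, ← mul_assoc, hs]; linarith
      rcases mul_eq_zero.mp this with h | h
      · exact absurd h hsne
      · linarith
    have hveq : v = v 0 • kv1 + v 1 • kv2 := by
      funext i
      fin_cases i <;> simp [kv1, kv2] <;> linarith [h2, h3, h4]
    rw [hveq]
    exact Submodule.add_mem _
      (Submodule.smul_mem _ _ (Submodule.subset_span ⟨0, rfl⟩))
      (Submodule.smul_mem _ _ (Submodule.subset_span ⟨1, rfl⟩))
  · rw [Submodule.span_le]
    rintro _ ⟨i, rfl⟩
    fin_cases i <;>
    · rw [SetLike.mem_coe, LinearMap.mem_ker, Matrix.mulVecLin_apply]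
      funext j
      fin_cases j <;>
        simp [M13, kv1, kv2, Matrix.mulVec, dotProduct, Fin.sum_univ_five,
          Matrix.vecHead, Matrix.vecTail] <;> nlinarith [hs]

lemma ker_dim : Module.finrank ℝ ↥(LinearMap.ker M13.mulVecLin) = 2 := by
  rw [ker_eq, finrank_span_eq_card kv_indep]
  simp

theorem stmt_13 :
    M13 ^ 3 = 0 ∧ M13 ^ 2 ≠ 0 ∧ M13.rank = 3 ∧
    (∀ μ : ℝ, Module.End.HasEigenvalue M13.mulVecLin μ → μ = 0) ∧
    Module.finrank ℝ ↥(LinearMap.ker M13.mulVecLin) = 2 := by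
  refine ⟨M13_cube, ?_, ?_, ?_, ker_dim⟩
  · rw [M13_sq]
    intro h
    have := congrFun (congrFun h 1) 1
    simp [M13sq] at this
  · have hrn := LinearMap.finrank_range_add_finrank_ker M13.mulVecLin
    have h5 : Module.finrank ℝ (Fin 5 → ℝ) = 5 := by simp
    rw [h5, ker_dim] at hrn
    show Module.finrank ℝ (LinearMap.range M13.mulVecLin) = 3
    omega
  · intro μ hμ
    obtain ⟨v, hv⟩ := hμ.exists_hasEigenvector
    have h3 : (M13.mulVecLin ^ 3) v = μ ^ 3 • v := hv.pow_apply 3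
    have hz : M13.mulVecLin ^ 3 = 0 := by
      have h : (M13 ^ 3).mulVecLin = M13.mulVecLin ^ 3 := by
        rw [pow_succ, pow_succ, pow_one, Matrix.mulVecLin_mul, Matrix.mulVecLin_mul,
          pow_succ, pow_succ, pow_one, Module.End.mul_eq_comp, Module.End.mul_eq_comp]
      rw [← h, M13_cube, Matrix.mulVecLin_zero]
    rw [hz] at h3
    have hμ3 : μ ^ 3 = 0 := by
      rcases smul_eq_zero.mp h3.symm with h | h
      · exact h
      · exact absurd h hv.right
    exact pow_eq_zero_iff (by norm_num) |>.mp hμ3
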